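/- Let q be a probability measure on a measurable space Ω, let f₁,…,f_k : Ω → ℝ be measurable functions, and let λ₁,…,λ_k ∈ ℝ be such that Z = ∫ exp(∑_{t=1}^k λ_t f_t) dq < ∞. Let p* be the probability measure with density exp(∑_{t=1}^k λ_t f_t)/Z with respect to q, and assume each f_t is p*-integrable. Then for every probability measure p that is absolutely continuous with respect to q, such that each f_t is p-integrable and ∫ f_t dp = ∫ f_t dp* for all t ∈ {1,…,k}, one has KL(p‖q) ≥ KL(p*‖q). In other words, p* maximizes the relative entropy −KL(·‖q) among all probability measures satisfying the given expectation constraints. -/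

import Mathlib

open MeasureTheory Real
open scoped Classical

/-- Gibbs' inequality: the integral of the log-likelihood ratio is nonnegative. -/
lemma gibbs_integral_llr_nonneg {Ω : Type*} [MeasurableSpace Ω]
    (p ν : Measure Ω) [IsProbabilityMeasure p] [IsProbabilityMeasure ν]
    (hpν : p ≪ ν) (hint : Integrable (llr p ν) p) :
    0 ≤ ∫ x, llr p ν x ∂p := by
  have h_exp_int : Integrable (fun x => Real.exp (- llr p ν x)) p :=
    (integrable_congr (exp_neg_llr hpν).symm).mp (Measure.integrable_toReal_rnDeriv)
  have h_jensen : Real.exp (∫ x, - llr p ν x ∂p) ≤ ∫ x, Real.exp (- llr p ν x) ∂p := by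
    have := convexOn_exp.map_integral_le (μ := p) (f := fun x => - llr p ν x)
      continuous_exp.continuousOn isClosed_univ
      (Filter.Eventually.of_forall fun _ => Set.mem_univ _) hint.neg h_exp_int
    simpa using this
  have h_le_one : ∫ x, Real.exp (- llr p ν x) ∂p ≤ 1 := by
    rw [integral_congr_ae (exp_neg_llr hpν)]
    rw [Measure.integral_toReal_rnDeriv']
    have h1 : (ν Set.univ).toReal = 1 := by simp
    have h2 : 0 ≤ (ν.singularPart p Set.univ).toReal := ENNReal.toReal_nonneg
    simp only [measureReal_def]
    linarith
  have : Real.exp (∫ x, - llr p ν x ∂p) ≤ Real.exp 0 := by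
    simpa using h_jensen.trans h_le_one
  have := Real.exp_le_exp.mp this
  rw [integral_neg] at this
  linarith

/-- Kullback–Leibler divergence `KL(p‖q) = ∫ log (dp/dq) dp`, valued in `ℝ≥0∞`:
it is the integral of the log of the Radon–Nikodym derivative when `p ≪ q` and this
log-likelihood ratio is `p`-integrable, and `∞` otherwise. -/
noncomputable def klDiv {Ω : Type*} [MeasurableSpace Ω] (p q : Measure Ω) : ENNReal :=
  if p ≪ q ∧ Integrable (fun x => Real.log (p.rnDeriv q x).toReal) p
  then ENNReal.ofReal (∫ x, Real.log (p.rnDeriv q x).toReal ∂p)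
  else ⊤

/-- The exponentially tilted measure `p* = exp(∑ λ_t f_t)/Z · q` maximizes relative entropy
(minimizes `KL(·‖q)`) among all probability measures `p ≪ q` matching the expectations of
the `f_t` under `p*`. -/
theorem maxEnt_tilted_minimizes_klDiv
    {Ω : Type*} [MeasurableSpace Ω] (q : Measure Ω) [IsProbabilityMeasure q]
    (k : ℕ) (f : Fin k → Ω → ℝ) (hf : ∀ t, Measurable (f t))
    (lam : Fin k → ℝ)
    (hZ : Integrable (fun ω => Real.exp (∑ t, lam t * f t ω)) q)
    (pstar : Measure Ω)
    (hpstar : pstar = q.tilted (fun ω => ∑ t, lam t * f t ω))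
    (hfint : ∀ t, Integrable (f t) pstar) :
    ∀ p : Measure Ω, IsProbabilityMeasure p → p ≪ q →
      (∀ t, Integrable (f t) p) →
      (∀ t, ∫ ω, f t ω ∂p = ∫ ω, f t ω ∂pstar) →
      klDiv pstar q ≤ klDiv p q := by
  intro p hp hpq hfp hconstr
  set F : Ω → ℝ := fun ω => ∑ t, lam t * f t ω with hF
  have hFmeas : Measurable F := by
    apply Finset.measurable_sum
    intro t _
    exact (hf t).const_mul _
  have hpstar_prob : IsProbabilityMeasure pstar := by
    rw [hpstar]
    exact isProbabilityMeasure_tilted hZ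
  have hpstar_ac : pstar ≪ q := hpstar ▸ tilted_absolutelyContinuous q F
  have hq_pstar : q ≪ pstar := hpstar ▸ absolutelyContinuous_tilted hZ
  -- integrability of F
  have hFp : Integrable F p := integrable_finset_sum _ fun t _ => (hfp t).const_mul _
  have hFps : Integrable F pstar := integrable_finset_sum _ fun t _ => (hfint t).const_mul _
  -- llr pstar q
  have h_llr_star : llr pstar q =ᵐ[pstar] fun x => F x - Real.log (∫ z, Real.exp (F z) ∂q) := by
    have h := llr_tilted_left (μ := q) (ν := q) Measure.AbsolutelyContinuous.rfl hZ
      hFmeas.aemeasurable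
    have h2 : llr q q =ᵐ[q] fun _ => (0 : ℝ) := by
      filter_upwards [Measure.rnDeriv_self q] with x hx
      simp [llr, hx]
    have h3 : llr (q.tilted F) q =ᵐ[q] fun x => F x - Real.log (∫ z, Real.exp (F z) ∂q) := by
      filter_upwards [h, h2] with x hx hx2
      linarith [hx, hx2]
    rw [hpstar]
    exact (tilted_absolutelyContinuous q F).ae_le h3
  have h_llr_star_int : Integrable (llr pstar q) pstar :=
    (integrable_congr h_llr_star.symm).mp (hFps.sub (integrable_const _))
  have h_int_star : ∫ x, llr pstar q x ∂pstar
      = ∫ x, F x ∂pstar - Real.log (∫ z, Real.exp (F z) ∂q) := by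
    rw [integral_congr_ae h_llr_star, integral_sub hFps (integrable_const _)]
    simp
  -- case split on klDiv p q
  unfold klDiv
  by_cases hc : p ≪ q ∧ Integrable (fun x => Real.log (p.rnDeriv q x).toReal) p
  · rw [if_pos hc, if_pos ⟨hpstar_ac, h_llr_star_int⟩]
    have h_llr_pq_int : Integrable (llr p q) p := hc.2
    -- llr p pstar
    have hp_pstar : p ≪ pstar := hpq.trans hq_pstar
    have h_llr_pps_int : Integrable (llr p (q.tilted F)) p :=
      integrable_llr_tilted_right hpq hFp h_llr_pq_int hZ
    have h_eq : ∫ x, llr p (q.tilted F) x ∂p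
        = ∫ x, llr p q x ∂p - ∫ x, F x ∂p + Real.log (∫ z, Real.exp (F z) ∂q) :=
      integral_llr_tilted_right hpq hFp hZ h_llr_pq_int
    have h_gibbs : 0 ≤ ∫ x, llr p (q.tilted F) x ∂p := by
      have : IsProbabilityMeasure (q.tilted F) := hpstar ▸ hpstar_prob
      exact gibbs_integral_llr_nonneg p (q.tilted F) (hpstar ▸ hp_pstar)
        (hpstar ▸ h_llr_pps_int)
    have hFeq : ∫ x, F x ∂p = ∫ x, F x ∂pstar := by
      rw [hF]
      simp only [integral_finset_sum _ fun t _ => (hfp t).const_mul (lam t),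
        integral_finset_sum _ fun t _ => (hfint t).const_mul (lam t)]
      refine Finset.sum_congr rfl fun t _ => ?_
      rw [integral_const_mul, integral_const_mul, hconstr t]
    apply ENNReal.ofReal_le_ofReal
    have : ∫ x, llr pstar q x ∂pstar ≤ ∫ x, llr p q x ∂p := by
      rw [h_int_star, ← hFeq]
      linarith [h_eq ▸ h_gibbs]
    exact this
  · rw [if_neg hc]
    exact le_top
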